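/- For every ε>0 and every Δ>0 there exist a binary-secret prior P(S,Y) and an L-Lipschitz convex utility u:[0,1]→ℝ with L ≤ 3Δ·(1+2/(e^ε−1)) such that U_ε − U₀ ≥ Δ, where for δ≥0, U_δ denotes the supremum of Σ_{t:P(T=t)>0} P(T=t)·u(P(Y=1|T=t)) over all δ-IP information structures P(S,Y,T) (over all finite signal sets 𝒯) whose marginal on (S,Y) equals the given prior. -/

import Mathlib

open Real
open scoped Classical

noncomputable section

namespace IPPaper

variable {S T : Type} [Fintype S] [Fintype T]

/-- Marginal probability of the secret `S`. -/
def pS (P : S → Bool → T → ℝ) (s : S) : ℝ := ∑ y, ∑ t, P s y t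

/-- Marginal probability of the signal `T`. -/
def pT (P : S → Bool → T → ℝ) (t : T) : ℝ := ∑ s, ∑ y, P s y t

/-- Joint marginal on `(S,T)`. -/
def pST (P : S → Bool → T → ℝ) (s : S) (t : T) : ℝ := ∑ y, P s y t

/-- Joint marginal on `(Y,T)`. -/
def pYT (P : S → Bool → T → ℝ) (y : Bool) (t : T) : ℝ := ∑ s, P s y t

/-- Joint marginal on `(S,Y)`. -/
def pSY (P : S → Bool → T → ℝ) (s : S) (y : Bool) : ℝ := ∑ t, P s y t

/-- An information structure: nonnegative, sums to one, every secret has positive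
probability. -/
def InfoStructure (P : S → Bool → T → ℝ) : Prop :=
  (∀ s y t, 0 ≤ P s y t) ∧ (∑ s, ∑ y, ∑ t, P s y t) = 1 ∧ ∀ s, 0 < pS P s

/-- Conditional probability `P(T = t | S = s)`. -/
def condTS (P : S → Bool → T → ℝ) (t : T) (s : S) : ℝ := pST P s t / pS P s

/-- Conditional probability `P(S = s | T = t)`. -/
def condST (P : S → Bool → T → ℝ) (s : S) (t : T) : ℝ := pST P s t / pT P t

/-- Posterior `P(Y = 1 | T = t)`. -/
def postYT (P : S → Bool → T → ℝ) (t : T) : ℝ := pYT P true t / pT P t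

/-- Posterior `P(Y = 1 | S = s, T = t)`. -/
def postYST (P : S → Bool → T → ℝ) (s : S) (t : T) : ℝ := P s true t / pST P s t

/-- Prior conditional `P(Y = 1 | S = s)`. -/
def qS (P : S → Bool → T → ℝ) (s : S) : ℝ := pSY P s true / pS P s

/-- `ε`-inferential privacy. -/
def IsIP (ε : ℝ) (P : S → Bool → T → ℝ) : Prop :=
  ∀ s₁ s₂ t, condTS P t s₁ ≤ Real.exp ε * condTS P t s₂

/-- Blackwell dominance via a row-stochastic garbling kernel. -/
def BlackwellDom {T₁ T₂ : Type} [Fintype T₁] [Fintype T₂]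
    (Q₁ : Bool → T₁ → ℝ) (Q₂ : Bool → T₂ → ℝ) : Prop :=
  ∃ G : T₁ → T₂ → ℝ, (∀ a b, 0 ≤ G a b) ∧ (∀ a, ∑ b, G a b = 1) ∧
    ∀ y b, Q₂ y b = ∑ a, Q₁ y a * G a b

/-- `ε`-IP Blackwell optimality: no ε-IP information structure with the same
marginal on `(S,Y)` (over any finite signal set) strictly Blackwell dominates it. -/
def BlackwellOptimal (ε : ℝ) (P : S → Bool → T → ℝ) : Prop :=
  InfoStructure P ∧ IsIP ε P ∧
  ¬ ∃ (n : ℕ) (P' : S → Bool → Fin n → ℝ),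
      InfoStructure P' ∧ IsIP ε P' ∧ (∀ s y, pSY P' s y = pSY P s y) ∧
      BlackwellDom (pYT P') (pYT P) ∧ ¬ BlackwellDom (pYT P) (pYT P')

/-- Membership in `T̃`: signals with positive probability and nondegenerate posterior. -/
def inTildeT (P : S → Bool → T → ℝ) (t : T) : Prop :=
  0 < pT P t ∧ postYT P t ≠ 0 ∧ postYT P t ≠ 1

/-- `L_t = min_s P(T=t|S=s)`. -/
def Lval [Nonempty S] (P : S → Bool → T → ℝ) (t : T) : ℝ :=
  Finset.univ.inf' Finset.univ_nonempty (fun s => condTS P t s)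

/-- `H_t = max_s P(T=t|S=s)`. -/
def Hval [Nonempty S] (P : S → Bool → T → ℝ) (t : T) : ℝ :=
  Finset.univ.sup' Finset.univ_nonempty (fun s => condTS P t s)

/-- Expected utility `Σ_{t : P(T=t)>0} P(T=t)·u(P(Y=1|T=t))`. -/
def EU (P : S → Bool → T → ℝ) (u : ℝ → ℝ) : ℝ :=
  ∑ t ∈ Finset.univ.filter (fun t => 0 < pT P t), pT P t * u (postYT P t)

end IPPaper

namespace IPPaper

set_option maxHeartbeats 2000000 in
/-- arbitrarily large utility gap between ε-IP and perfect (0-IP)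
privacy, witnessed by an L-Lipschitz convex utility with
`L ≤ 3Δ(1 + 2/(e^ε − 1))`. -/
theorem statement8 (ε Δ : ℝ) (hε : 0 < ε) (hΔ : 0 < Δ) :
    ∃ (Pr : Fin 2 → Bool → ℝ) (u : ℝ → ℝ) (L : ℝ),
      -- a binary-secret prior
      (∀ s y, 0 ≤ Pr s y) ∧ (∑ s, ∑ y, Pr s y = 1) ∧
      (∀ s : Fin 2, 0 < Pr s true + Pr s false) ∧
      Pr 1 true / (Pr 1 true + Pr 1 false) ≤ Pr 0 true / (Pr 0 true + Pr 0 false) ∧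
      -- an L-Lipschitz convex utility with the stated bound on L
      L ≤ 3 * Δ * (1 + 2 / (Real.exp ε - 1)) ∧
      ConvexOn ℝ (Set.Icc 0 1) u ∧
      LipschitzOnWith (Real.toNNReal L) u (Set.Icc (0 : ℝ) 1) ∧
      -- U_ε − U₀ ≥ Δ
      sSup {x | ∃ (n : ℕ) (P : Fin 2 → Bool → Fin n → ℝ),
          InfoStructure P ∧ IsIP ε P ∧ (∀ s y, pSY P s y = Pr s y) ∧ EU P u = x} -
        sSup {x | ∃ (n : ℕ) (P : Fin 2 → Bool → Fin n → ℝ),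
          InfoStructure P ∧ IsIP 0 P ∧ (∀ s y, pSY P s y = Pr s y) ∧ EU P u = x}
        ≥ Δ := by

  -- Basic facts about `e^ε`
  have hE1 : (1:ℝ) < Real.exp ε := by nlinarith [Real.add_one_le_exp ε]
  set E : ℝ := Real.exp ε with hEdef
  have hEm1 : 0 < E - 1 := by linarith
  have hE0 : 0 < E := by linarith
  have hEp1 : 0 < 1 + E := by linarith
  -- the high posterior
  set a : ℝ := E / (1 + E) with hadef
  have ha_half : 1/2 < a := by
    rw [hadef, lt_div_iff₀ hEp1]; linarith
  have ha1 : a < 1 := by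
    rw [hadef, div_lt_one hEp1]; linarith
  have ha0 : 0 < a := by positivity
  -- the Lipschitz constant
  set c : ℝ := 2*Δ + 4*Δ/(E-1) with hcdef
  have hc0 : 0 < c := by positivity
  have hne1 : E - 1 ≠ 0 := ne_of_gt hEm1
  have hne2 : (1:ℝ) + E ≠ 0 := ne_of_gt hEp1
  have h1a : 1 - a = 1 / (1 + E) := by
    rw [hadef]; field_simp; ring
  have key1 : a ≤ E * (1 - a) := le_of_eq (by rw [h1a, hadef, mul_one_div])
  have key2 : 1 - a ≤ E * a := by
    have hEE : 1 ≤ E * E := by nlinarith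
    rw [h1a, hadef]
    have h : E * (E / (1+E)) = (E*E) / (1+E) := by ring
    rw [h, div_le_div_iff₀ hEp1 hEp1]
    nlinarith
  have key3 : a ≤ E * a := le_mul_of_one_le_left ha0.le hE1.le
  have key4 : 1 - a ≤ E * (1 - a) :=
    le_mul_of_one_le_left (by linarith) hE1.le
  -- the utility function
  set u : ℝ → ℝ := fun x => c * |x - 1/2| with hudef
  have hu_half : u (1/2) = 0 := by simp [hudef]
  have hu_bound : ∀ x : ℝ, 0 ≤ x → x ≤ 1 → u x ≤ c/2 := by
    intro x h0 h1
    have habs : |x - 1/2| ≤ 1/2 := by rw [abs_le]; constructor <;> linarith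
    calc u x = c * |x - 1/2| := rfl
      _ ≤ c * (1/2) := by
          exact mul_le_mul_of_nonneg_left habs hc0.le
      _ = c/2 := by ring
  -- the prior
  set Pr : Fin 2 → Bool → ℝ := fun s y =>
    if s = 0 then (if y then 1/2 else 0) else (if y then 0 else 1/2) with hPrdef
  clear_value E a c u Pr
  refine ⟨Pr, u, c, ?_, ?_, ?_, ?_, ?_, ?_, ?_, ?_⟩
  · intro s y
    fin_cases s <;> cases y <;> simp [hPrdef] <;> norm_num
  · simp [hPrdef, Fin.sum_univ_two]
  · intro s
    fin_cases s <;> simp [hPrdef] <;> norm_num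
  · simp [hPrdef]
  · -- bound on the Lipschitz constant
    have hdpos : 0 < Δ/(E-1) := by positivity
    have hkey : 3 * Δ * (1 + 2 / (E - 1)) = 3*Δ + 6*(Δ/(E-1)) := by
      field_simp; ring
    rw [hkey, hcdef]
    have h4 : 4*Δ/(E-1) = 4*(Δ/(E-1)) := by ring
    rw [h4]; linarith
  · -- convexity
    refine ⟨convex_Icc 0 1, ?_⟩
    intro x hx y hy p q hp hq hpq
    simp only [hudef, smul_eq_mul]
    have h1 : p * x + q * y - 1/2 = p*(x - 1/2) + q*(y - 1/2) := by
      linear_combination hpq / 2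
    rw [h1]
    calc c * |p*(x-1/2) + q*(y-1/2)|
        ≤ c * (|p*(x-1/2)| + |q*(y-1/2)|) :=
          mul_le_mul_of_nonneg_left (abs_add_le _ _) hc0.le
      _ = p * (c * |x - 1/2|) + q * (c * |y - 1/2|) := by
          rw [abs_mul, abs_mul, abs_of_nonneg hp, abs_of_nonneg hq]; ring
  · -- Lipschitz
    have hL : LipschitzWith (Real.toNNReal c) u := by
      apply LipschitzWith.of_dist_le_mul
      intro x y
      rw [Real.coe_toNNReal _ hc0.le, Real.dist_eq, Real.dist_eq, hudef]
      simp only []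
      rw [abs_sub_le_iff]
      have h1 := abs_sub_abs_le_abs_sub (x - 1/2) (y - 1/2)
      have h1' := abs_sub_abs_le_abs_sub (y - 1/2) (x - 1/2)
      have e1 : x - 1/2 - (y - 1/2) = x - y := by ring
      have e2 : y - 1/2 - (x - 1/2) = -(x - y) := by ring
      rw [e1] at h1
      rw [e2, abs_neg] at h1'
      constructor
      · nlinarith [mul_le_mul_of_nonneg_left h1 hc0.le]
      · nlinarith [mul_le_mul_of_nonneg_left h1' hc0.le]
    exact hL.lipschitzOnWith
  · -- the main gap statement
    -- the witness ε-IP structure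
    set Pw : Fin 2 → Bool → Fin 2 → ℝ := fun s y t =>
      (if s = 0 then (if y then (1:ℝ)/2 else 0) else (if y then 0 else 1/2)) *
      (if s = 0 then (if t = 1 then a else 1-a) else (if t = 1 then 1-a else a))
      with hPwdef
    clear_value Pw
    have hPw_nonneg : ∀ s y t, 0 ≤ Pw s y t := by
      intro s y t
      fin_cases s <;> fin_cases t <;> cases y <;> simp [hPwdef] <;> linarith
    have hpS0 : pS Pw 0 = 1/2 := by
      simp [pS, hPwdef, Fin.sum_univ_two, Fintype.sum_bool]; ring
    have hpS1 : pS Pw 1 = 1/2 := by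
      simp [pS, hPwdef, Fin.sum_univ_two, Fintype.sum_bool]; ring
    have hpT : ∀ t, pT Pw t = 1/2 := by
      intro t
      fin_cases t <;>
        · simp [pT, hPwdef, Fin.sum_univ_two, Fintype.sum_bool]; ring
    have hInfoW : InfoStructure Pw := by
      refine ⟨hPw_nonneg, ?_, ?_⟩
      · simp [hPwdef, Fin.sum_univ_two, Fintype.sum_bool]; ring
      · intro s
        have h01 : (0:ℝ) < 1/2 := by norm_num
        fin_cases s
        · exact hpS0 ▸ h01
        · exact hpS1 ▸ h01
    have hpST00 : pST Pw 0 0 = (1-a)/2 := by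
      simp [pST, hPwdef, Fintype.sum_bool]; ring
    have hpST01 : pST Pw 0 1 = a/2 := by
      simp [pST, hPwdef, Fintype.sum_bool]; ring
    have hpST10 : pST Pw 1 0 = a/2 := by
      simp [pST, hPwdef, Fintype.sum_bool]; ring
    have hpST11 : pST Pw 1 1 = (1-a)/2 := by
      simp [pST, hPwdef, Fintype.sum_bool]; ring
    have hIPW : IsIP ε Pw := by
      have hdd : ∀ z : ℝ, (z/2)/(1/2) = z := by intro z; ring
      intro s1 s2 t
      fin_cases s1 <;> fin_cases s2 <;> fin_cases t <;>
        simp only [Fin.mk_zero, Fin.mk_one, Fin.isValue, condTS, hpS0, hpS1,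
          hpST00, hpST01, hpST10, hpST11, hdd] <;>
        rw [← hEdef] <;> linarith [key1, key2, key3, key4]
    have hMargW : ∀ s y, pSY Pw s y = Pr s y := by
      intro s y
      fin_cases s <;> cases y <;>
        · simp [pSY, hPwdef, hPrdef, Fin.sum_univ_two]
          try ring
    have hpostW0 : postYT Pw 0 = 1 - a := by
      rw [postYT, hpT 0]
      have hy : pYT Pw true 0 = (1-a)/2 := by
        simp [pYT, hPwdef, Fin.sum_univ_two]; ring
      rw [hy]; ring
    have hpostW1 : postYT Pw 1 = a := by
      rw [postYT, hpT 1]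
      have hy : pYT Pw true 1 = a/2 := by
        simp [pYT, hPwdef, Fin.sum_univ_two]; ring
      rw [hy]; ring
    have hEUW : EU Pw u = Δ := by
      have hfilter : (Finset.univ.filter (fun t => 0 < pT Pw t)) = (Finset.univ : Finset (Fin 2)) := by
        apply Finset.filter_true_of_mem
        intro t _
        rw [hpT t]; norm_num
      rw [EU, hfilter, Fin.sum_univ_two, hpostW0, hpostW1, hpT 0, hpT 1]
      have hu_a : u a = c * (a - 1/2) := by
        simp only [hudef]
        rw [abs_of_pos (by linarith)]
      have hu_a2 : u (1 - a) = c * (a - 1/2) := by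
        simp only [hudef]
        have : |1 - a - 1/2| = a - 1/2 := by
          rw [abs_of_nonpos (by linarith)]; ring
        rw [this]
      rw [hu_a, hu_a2]
      have : (1/2 : ℝ) * (c * (a - 1/2)) + 1/2 * (c * (a - 1/2)) = c * (a - 1/2) := by ring
      rw [this, hcdef, hadef]
      field_simp
      ring
    -- every info structure has EU ≤ c/2
    have hEUle : ∀ (n : ℕ) (P : Fin 2 → Bool → Fin n → ℝ), InfoStructure P → EU P u ≤ c/2 := by
      intro n P hP
      obtain ⟨hnn, hsum, _⟩ := hP
      have hpT_nonneg : ∀ t, 0 ≤ pT P t := by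
        intro t
        apply Finset.sum_nonneg; intro s _
        apply Finset.sum_nonneg; intro y _
        exact hnn s y t
      have hpTsum : ∑ t, pT P t = 1 := by
        rw [← hsum]
        simp only [pT]
        rw [Finset.sum_comm]
        exact Finset.sum_congr rfl fun s _ => Finset.sum_comm
      have hsplit : ∀ t, pT P t = pYT P true t + pYT P false t := by
        intro t
        simp only [pT, pYT]
        rw [Finset.sum_comm]
        simp [Fintype.sum_bool]
      have hYnn : ∀ y t, 0 ≤ pYT P y t := by
        intro y t
        apply Finset.sum_nonneg; intro s _; exact hnn s y t
      calc EU P u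
          ≤ ∑ t ∈ Finset.univ.filter (fun t => 0 < pT P t), pT P t * (c/2) := by
            apply Finset.sum_le_sum
            intro t ht
            have hpt : 0 < pT P t := (Finset.mem_filter.mp ht).2
            have hpost0 : 0 ≤ postYT P t := div_nonneg (hYnn true t) hpt.le
            have hpost1 : postYT P t ≤ 1 := by
              rw [postYT, div_le_one hpt]
              rw [hsplit t]
              linarith [hYnn false t]
            exact mul_le_mul_of_nonneg_left (hu_bound _ hpost0 hpost1) hpt.le
        _ ≤ ∑ t : Fin n, pT P t * (c/2) := by
            apply Finset.sum_le_sum_of_subset_of_nonneg (Finset.filter_subset _ _)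
            intro t _ _
            exact mul_nonneg (hpT_nonneg t) (by positivity)
        _ = c/2 := by rw [← Finset.sum_mul, hpTsum, one_mul]
    -- the 0-IP side is always 0
    have hB : ∀ x ∈ {x | ∃ (n : ℕ) (P : Fin 2 → Bool → Fin n → ℝ),
          InfoStructure P ∧ IsIP 0 P ∧ (∀ s y, pSY P s y = Pr s y) ∧ EU P u = x}, x ≤ 0 := by
      rintro x ⟨n, P, ⟨hnn, hsum, hpos⟩, hIP, hmarg, hEUx⟩
      have hP0f : ∀ t, P 0 false t = 0 := by
        have h0 : ∑ t, P 0 false t = 0 := by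
          have := hmarg 0 false
          simp only [pSY] at this
          rw [this]
          simp [hPrdef]
        intro t
        exact (Finset.sum_eq_zero_iff_of_nonneg (fun t _ => hnn 0 false t)).mp h0 t (Finset.mem_univ t)
      have hP1t : ∀ t, P 1 true t = 0 := by
        have h0 : ∑ t, P 1 true t = 0 := by
          have := hmarg 1 true
          simp only [pSY] at this
          rw [this]
          simp [hPrdef]
        intro t
        exact (Finset.sum_eq_zero_iff_of_nonneg (fun t _ => hnn 1 true t)).mp h0 t (Finset.mem_univ t)
      have hpSeq : ∀ s, pS P s = pSY P s true + pSY P s false := by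
        intro s
        simp [pS, pSY, Fintype.sum_bool]
      have hpS0' : pS P 0 = 1/2 := by
        rw [hpSeq, hmarg 0 true, hmarg 0 false]
        simp [hPrdef]
      have hpS1' : pS P 1 = 1/2 := by
        rw [hpSeq, hmarg 1 true, hmarg 1 false]
        simp [hPrdef]
      have hSTeq : ∀ t, pST P 0 t = pST P 1 t := by
        intro t
        have h1 := hIP 0 1 t
        have h2 := hIP 1 0 t
        rw [Real.exp_zero, one_mul] at h1 h2
        have heq : condTS P t 0 = condTS P t 1 := le_antisymm h1 h2
        simp only [condTS, hpS0', hpS1'] at heq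
        have h2ne : ((1:ℝ)/2) ≠ 0 := by norm_num
        field_simp at heq
        linarith
      have hYT : ∀ t, pYT P true t = pST P 0 t := by
        intro t
        simp only [pYT, pST, Fin.sum_univ_two, Fintype.sum_bool]
        rw [hP0f t, hP1t t]
        try ring
      have hpTeq : ∀ t, pT P t = pST P 0 t + pST P 1 t := by
        intro t
        simp [pT, pST, Fin.sum_univ_two]
      have hEU0 : EU P u = 0 := by
        apply Finset.sum_eq_zero
        intro t ht
        have hpt : 0 < pT P t := (Finset.mem_filter.mp ht).2
        have h2 : pT P t = 2 * pST P 0 t := by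
          rw [hpTeq t, hSTeq t]; ring
        have hSTpos : 0 < pST P 0 t := by linarith
        have hpost : postYT P t = 1/2 := by
          rw [postYT, hYT t, h2]
          rw [div_eq_iff (by linarith)]
          ring
        rw [hpost, hu_half, mul_zero]
      rw [← hEUx, hEU0]
    have hAbdd : BddAbove {x | ∃ (n : ℕ) (P : Fin 2 → Bool → Fin n → ℝ),
          InfoStructure P ∧ IsIP ε P ∧ (∀ s y, pSY P s y = Pr s y) ∧ EU P u = x} := by
      refine ⟨c/2, ?_⟩
      rintro x ⟨n, P, hP, _, _, hEUx⟩
      rw [← hEUx]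
      exact hEUle n P hP
    have hAmem : Δ ∈ {x | ∃ (n : ℕ) (P : Fin 2 → Bool → Fin n → ℝ),
          InfoStructure P ∧ IsIP ε P ∧ (∀ s y, pSY P s y = Pr s y) ∧ EU P u = x} :=
      ⟨2, Pw, hInfoW, hIPW, hMargW, hEUW⟩
    have h1 : Δ ≤ sSup {x | ∃ (n : ℕ) (P : Fin 2 → Bool → Fin n → ℝ),
          InfoStructure P ∧ IsIP ε P ∧ (∀ s y, pSY P s y = Pr s y) ∧ EU P u = x} :=
      le_csSup hAbdd hAmem
    have h2 : sSup {x | ∃ (n : ℕ) (P : Fin 2 → Bool → Fin n → ℝ),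
          InfoStructure P ∧ IsIP 0 P ∧ (∀ s y, pSY P s y = Pr s y) ∧ EU P u = x} ≤ 0 :=
      Real.sSup_nonpos hB
    linarith

end IPPaper
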